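/- Let M be an invertible real n×n matrix, E an arbitrary real n×n matrix, and P = MMᵀ. Define S = ∫₀^∞ e^{−tP}(PEᵀ + EP)e^{−tP} dt. Then S is symmetric, S satisfies SP + PS = PEᵀ + EP, and (EM − SM)Mᵀ is skew-symmetric; consequently EM = K M^{−T} + S M where K = (EM − SM)Mᵀ is skew-symmetric. -/

import Mathlib

open Matrix MeasureTheory

/-- `∫₀^∞ e^{-ct} dt = c⁻¹` for `c > 0`. -/
private lemma exp_neg_mul_integral_Ioi_zero {c : ℝ} (hc : 0 < c) :
    ∫ t in Set.Ioi (0:ℝ), Real.exp (-(c * t)) = c⁻¹ := by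
  have h := integral_comp_mul_left_Ioi (fun y => Real.exp (-y)) 0 hc
  simp only [mul_zero] at h
  rw [h, integral_exp_neg_Ioi_zero, smul_eq_mul, mul_one]

/-- `M Mᵀ` is positive definite for invertible real `M`. -/
private lemma posDef_mul_transpose_self {n : ℕ} (M : Matrix (Fin n) (Fin n) ℝ)
    (hM : IsUnit M.det) : (M * Mᵀ).PosDef := by
  have hMT : IsUnit Mᵀ.det := by rwa [Matrix.det_transpose]
  refine posDef_iff_dotProduct_mulVec.mpr ⟨?_, fun x hx => ?_⟩
  · rw [Matrix.IsHermitian, conjTranspose_eq_transpose_of_trivial, transpose_mul,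
      transpose_transpose]
  · have hx' : Mᵀ *ᵥ x ≠ 0 := by
      intro h
      apply hx
      have : (Mᵀ)⁻¹ *ᵥ (Mᵀ *ᵥ x) = x := by
        rw [Matrix.mulVec_mulVec, Matrix.nonsing_inv_mul _ hMT, Matrix.one_mulVec]
      rw [h, Matrix.mulVec_zero] at this
      exact this.symm
    have key : star x ⬝ᵥ ((M * Mᵀ) *ᵥ x) = (Mᵀ *ᵥ x) ⬝ᵥ (Mᵀ *ᵥ x) := by
      rw [star_trivial, ← Matrix.mulVec_mulVec, Matrix.dotProduct_mulVec,
        ← Matrix.mulVec_transpose]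
    rw [key]
    have hex : ∃ i, (Mᵀ *ᵥ x) i ≠ 0 := by
      by_contra hcon
      push_neg at hcon
      exact hx' (funext hcon)
    obtain ⟨i, hi⟩ := hex
    have : 0 < ∑ j, (Mᵀ *ᵥ x) j * (Mᵀ *ᵥ x) j := by
      apply Finset.sum_pos' (fun j _ => mul_self_nonneg _)
      exact ⟨i, Finset.mem_univ i, mul_self_pos.mpr hi⟩
    simpa [dotProduct] using this

/-- For invertible `M`, arbitrary `E`, and `P = M Mᵀ`, the matrix
`S = ∫₀^∞ e^{-tP}(PEᵀ + EP)e^{-tP} dt` is symmetric, solves `SP + PS = PEᵀ + EP`, and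
`(EM - SM)Mᵀ` is skew-symmetric; hence `EM = K M⁻ᵀ + S M` with `K = (EM - SM)Mᵀ`
skew-symmetric. -/
theorem vertical_component_left (n : ℕ) (M E : Matrix (Fin n) (Fin n) ℝ)
    (hM : IsUnit M.det) :
    ∀ P S : Matrix (Fin n) (Fin n) ℝ, P = M * Mᵀ →
      S = (Matrix.of fun i j : Fin n => ∫ t in Set.Ioi (0 : ℝ),
        (NormedSpace.exp ((-t) • P) * (P * Eᵀ + E * P) *
          NormedSpace.exp ((-t) • P)) i j) →
      Sᵀ = S ∧
      S * P + P * S = P * Eᵀ + E * P ∧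
      ((E * M - S * M) * Mᵀ)ᵀ = -((E * M - S * M) * Mᵀ) ∧
      E * M = ((E * M - S * M) * Mᵀ) * (M⁻¹)ᵀ + S * M := by
  intro P S hPdef hSdef
  have hPsymm : Pᵀ = P := by
    rw [hPdef, transpose_mul, transpose_transpose]
  have hPpd : P.PosDef := by
    rw [hPdef]; exact posDef_mul_transpose_self M hM
  have hH : P.IsHermitian := hPpd.1
  set Q : Matrix (Fin n) (Fin n) ℝ := P * Eᵀ + E * P with hQ
  have hQsym : Qᵀ = Q := by
    rw [hQ, transpose_add, transpose_mul, transpose_mul, transpose_transpose, hPsymm,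
      add_comm]
  set U : Matrix (Fin n) (Fin n) ℝ := (hH.eigenvectorUnitary : Matrix (Fin n) (Fin n) ℝ)
    with hUdef
  set v : Fin n → ℝ := hH.eigenvalues with hvdef
  have hvpos : ∀ i, 0 < v i := fun i => hPpd.eigenvalues_pos i
  have hUsU : U * star U = 1 := mem_unitaryGroup_iff.mp (hH.eigenvectorUnitary).2
  have hsUU : star U * U = 1 := mem_unitaryGroup_iff'.mp (hH.eigenvectorUnitary).2
  have hUisUnit : IsUnit U := (Matrix.isUnit_iff_isUnit_det U).mpr
    (IsUnit.of_mul_eq_one _ (by rw [← Matrix.det_mul, hUsU, Matrix.det_one]))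
  have hUinv : U⁻¹ = star U := Matrix.inv_eq_right_inv hUsU
  have hspec : P = U * diagonal v * star U := by
    have := hH.spectral_theorem
    simpa using this
  -- the matrix exponential of `(-t) • P`
  have hexp : ∀ t : ℝ, NormedSpace.exp ((-t) • P)
      = U * diagonal (fun k => Real.exp (-t * v k)) * star U := by
    intro t
    have h1 : (-t) • P = U * ((-t) • diagonal v) * U⁻¹ := by
      rw [hUinv, hspec, Matrix.mul_smul, Matrix.smul_mul]
    rw [h1, Matrix.exp_conj _ _ hUisUnit, hUinv]
    have h2 : NormedSpace.exp ((-t) • diagonal v)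
        = diagonal (fun k => Real.exp (-t * v k)) := by
      rw [← Matrix.diagonal_smul, Matrix.exp_diagonal]
      have h3 : NormedSpace.exp ((-t) • v) = fun k => Real.exp (-t * v k) := by
        funext k
        rw [Pi.coe_exp, Pi.smul_apply, smul_eq_mul, Real.exp_eq_exp_ℝ]
      rw [h3]
    rw [h2]
  have hexpSym : ∀ t : ℝ, (NormedSpace.exp ((-t) • P))ᵀ = NormedSpace.exp ((-t) • P) := by
    intro t
    rw [← Matrix.exp_transpose, transpose_smul, hPsymm]
  -- Part 1 : symmetry of S
  have hS1 : Sᵀ = S := by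
    rw [hSdef]
    ext i j
    rw [transpose_apply, of_apply, of_apply]
    apply integral_congr_ae
    filter_upwards with t
    have hsym : (NormedSpace.exp ((-t) • P) * Q * NormedSpace.exp ((-t) • P))ᵀ
        = NormedSpace.exp ((-t) • P) * Q * NormedSpace.exp ((-t) • P) := by
      rw [transpose_mul, transpose_mul, hexpSym t, hQsym, ← Matrix.mul_assoc]
    calc (NormedSpace.exp ((-t) • P) * Q * NormedSpace.exp ((-t) • P)) j i
        = (NormedSpace.exp ((-t) • P) * Q * NormedSpace.exp ((-t) • P))ᵀ i j := by
          rw [transpose_apply]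
      _ = (NormedSpace.exp ((-t) • P) * Q * NormedSpace.exp ((-t) • P)) i j := by
          rw [hsym]
  -- the core integral computation
  set R : Matrix (Fin n) (Fin n) ℝ := star U * Q * U with hR
  have hInt : ∀ i j, (∫ t in Set.Ioi (0:ℝ),
      (NormedSpace.exp ((-t) • P) * Q * NormedSpace.exp ((-t) • P)) i j)
      = ∑ l, ∑ k, U i k * R k l * star U l j * (v k + v l)⁻¹ := by
    intro i j
    have hpt : ∀ t : ℝ,
        (NormedSpace.exp ((-t) • P) * Q * NormedSpace.exp ((-t) • P)) i j
        = ∑ l, ∑ k, U i k * R k l * star U l j * Real.exp (-((v k + v l) * t)) := by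
      intro t
      rw [hexp t]
      have hassoc : U * diagonal (fun k => Real.exp (-t * v k)) * star U * Q *
            (U * diagonal (fun k => Real.exp (-t * v k)) * star U)
          = U * (diagonal (fun k => Real.exp (-t * v k)) * R *
              diagonal (fun k => Real.exp (-t * v k))) * star U := by
        rw [hR]
        simp only [Matrix.mul_assoc]
      rw [hassoc, Matrix.mul_apply]
      refine Finset.sum_congr rfl fun l _ => ?_
      rw [Matrix.mul_apply, Finset.sum_mul]
      refine Finset.sum_congr rfl fun k _ => ?_
      rw [Matrix.mul_diagonal, Matrix.diagonal_mul,
        show -((v k + v l) * t) = (-t * v k) + (-t * v l) by ring, Real.exp_add]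
      ring
    rw [integral_congr_ae (Filter.Eventually.of_forall hpt)]
    have hint1 : ∀ (k l : Fin n), IntegrableOn
        (fun t : ℝ => U i k * R k l * star U l j * Real.exp (-((v k + v l) * t)))
        (Set.Ioi (0:ℝ)) := by
      intro k l
      have hpos : 0 < v k + v l := add_pos (hvpos k) (hvpos l)
      have := (exp_neg_integrableOn_Ioi 0 hpos).const_mul (U i k * R k l * star U l j)
      simp only [neg_mul] at this
      exact this
    rw [integral_finset_sum _ (fun l _ => integrable_finset_sum _ (fun k _ => hint1 k l))]
    refine Finset.sum_congr rfl fun l _ => ?_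
    rw [integral_finset_sum _ (fun k _ => hint1 k l)]
    refine Finset.sum_congr rfl fun k _ => ?_
    rw [MeasureTheory.integral_const_mul, exp_neg_mul_integral_Ioi_zero (add_pos (hvpos k) (hvpos l))]
  -- S as a conjugated matrix
  set Sh : Matrix (Fin n) (Fin n) ℝ := Matrix.of fun k l => R k l * (v k + v l)⁻¹ with hShdef
  have hSeq : S = U * Sh * star U := by
    rw [hSdef]
    ext i j
    rw [of_apply, hInt i j, Matrix.mul_apply]
    refine Finset.sum_congr rfl fun l _ => ?_
    rw [Matrix.mul_apply, Finset.sum_mul]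
    refine Finset.sum_congr rfl fun k _ => ?_
    rw [hShdef, of_apply]
    ring
  -- conjugation multiplicativity
  have hconj : ∀ A B : Matrix (Fin n) (Fin n) ℝ,
      (U * A * star U) * (U * B * star U) = U * (A * B) * star U := by
    intro A B
    simp only [← Matrix.mul_assoc]
    rw [Matrix.mul_assoc (U * A) (star U) U, hsUU, Matrix.mul_one]
  have hmid : Sh * diagonal v + diagonal v * Sh = R := by
    ext k l
    rw [Matrix.add_apply, Matrix.mul_diagonal, Matrix.diagonal_mul, hShdef, of_apply]
    have h0 : v k + v l ≠ 0 := (add_pos (hvpos k) (hvpos l)).ne'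
    field_simp
    ring
  -- Part 2 : the Lyapunov equation
  have hS2 : S * P + P * S = Q := by
    have h1 : S * P = U * (Sh * diagonal v) * star U := by
      rw [hSeq]
      conv_lhs => rw [hspec]
      rw [hconj]
    have h2 : P * S = U * (diagonal v * Sh) * star U := by
      rw [hSeq]
      conv_lhs => rw [hspec]
      rw [hconj]
    rw [h1, h2]
    have h3 : U * (Sh * diagonal v) * star U + U * (diagonal v * Sh) * star U
        = U * (Sh * diagonal v + diagonal v * Sh) * star U := by
      rw [Matrix.mul_add, Matrix.add_mul]
    rw [h3, hmid, hR]
    simp only [← Matrix.mul_assoc]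
    rw [hUsU, Matrix.one_mul, Matrix.mul_assoc, hUsU, Matrix.mul_one]
  -- Part 3 : skew-symmetry
  have hS3 : ((E * M - S * M) * Mᵀ)ᵀ = -((E * M - S * M) * Mᵀ) := by
    have h1 : (E * M - S * M) * Mᵀ = E * P - S * P := by
      rw [hPdef, Matrix.sub_mul, Matrix.mul_assoc, Matrix.mul_assoc]
    rw [h1, transpose_sub, transpose_mul, transpose_mul, hPsymm, hS1, neg_sub,
      sub_eq_sub_iff_add_eq_add]
    calc P * Eᵀ + E * P = Q := hQ.symm
      _ = S * P + P * S := hS2.symm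
  -- Part 4 : the decomposition
  have hS4 : E * M = ((E * M - S * M) * Mᵀ) * (M⁻¹)ᵀ + S * M := by
    have hMMinv : Mᵀ * (M⁻¹)ᵀ = 1 := by
      rw [← Matrix.transpose_mul, Matrix.nonsing_inv_mul M hM, Matrix.transpose_one]
    rw [Matrix.mul_assoc, hMMinv, Matrix.mul_one]
    abel
  exact ⟨hS1, hS2, hS3, hS4⟩
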